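/- For every real β > Φ(q), the Laplace transform of the q-scale function satisfies ∫_0^∞ e^{−βx} W^{(q)}(x) dx = 1/(ψ(β) − q). -/

import Mathlib

open Real Set MeasureTheory Filter

lemma exp_integrableOn (c : ℝ) (hc : c < 0) :
    IntegrableOn (fun x : ℝ => Real.exp (c * x)) (Ioi (0:ℝ)) := by
  have := exp_neg_integrableOn_Ioi 0 (b := -c) (by linarith)
  simpa using this

lemma exp_integral (c : ℝ) (hc : c < 0) :
    (∫ x in Ioi (0:ℝ), Real.exp (c * x)) = -1 / c := by
  have hc' : c ≠ 0 := ne_of_lt hc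
  have key := integral_Ioi_of_hasDerivAt_of_tendsto'
    (f := fun x : ℝ => Real.exp (c * x) / c) (f' := fun x : ℝ => Real.exp (c * x))
    (a := 0) (m := 0) ?_ (exp_integrableOn c hc) ?_
  · rw [key]; simp; ring
  · intro x _
    have h : HasDerivAt (fun x : ℝ => Real.exp (c * x)) (Real.exp (c*x) * c) x := by
      simpa [mul_comm, Function.comp_def] using (Real.hasDerivAt_exp (c*x)).comp x ((hasDerivAt_id x).const_mul c)
    simpa [mul_div_assoc, mul_div_cancel_right₀ _ hc'] using h.div_const c
  · have : Tendsto (fun x : ℝ => Real.exp (c * x)) atTop (nhds 0) := by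
      apply Real.tendsto_exp_atBot.comp
      exact Tendsto.const_mul_atTop_of_neg hc tendsto_id
    simpa using this.div_const c

lemma psi_hasDerivAt (σ μ a ρ r : ℝ) (hr : ρ + r ≠ 0) :
    HasDerivAt (fun l : ℝ => σ^2/2 * l^2 + μ*l - a*l/(ρ+l))
      (σ^2*r + μ - a*ρ/(ρ+r)^2) r := by
  have h1 : HasDerivAt (fun l : ℝ => σ^2/2 * l^2) (σ^2/2 * (2*r)) r := by
    simpa using (hasDerivAt_pow 2 r).const_mul (σ^2/2)
  have h2 : HasDerivAt (fun l : ℝ => μ * l) μ r := by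
    simpa using (hasDerivAt_id r).const_mul μ
  have h3 : HasDerivAt (fun l : ℝ => a * l) a r := by
    simpa using (hasDerivAt_id r).const_mul a
  have h4 : HasDerivAt (fun l : ℝ => ρ + l) 1 r := by
    simpa using (hasDerivAt_id r).const_add ρ
  have h5 := (h3.div h4 hr)
  have := (h1.add h2).sub h5
  convert this using 1
  · rfl
  · rfl
  · rfl
  ring

set_option maxHeartbeats 2000000

/-- With the q-scale function
W(x) = e^{Φ(q)x}/ψ'(Φ(q)) + e^{αx}/ψ'(α) + e^{β₀x}/ψ'(β₀), for every real β > Φ(q),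
∫_0^∞ e^{−βx} W(x) dx = 1/(ψ(β) − q). -/
theorem stmt_6 (σ μ a ρ q β₀ α Φq : ℝ) (ψ : ℝ → ℝ)
    (hσ : 0 < σ) (hμ : 0 ≤ μ) (ha : 0 < a) (hρ : 0 < ρ) (hq : 0 < q)
    (hψ : ∀ lam : ℝ, ψ lam = σ ^ 2 / 2 * lam ^ 2 + μ * lam - a * lam / (ρ + lam))
    (hβρ : β₀ < -ρ) (hρα : -ρ < α) (hα0 : α < 0) (hΦ : 0 < Φq)
    (hrβ : ψ β₀ = q) (hrα : ψ α = q) (hrΦ : ψ Φq = q)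
    (hdβ : deriv ψ β₀ ≠ 0) (hdα : deriv ψ α ≠ 0) (hdΦ : deriv ψ Φq ≠ 0)
    (W : ℝ → ℝ)
    (hW : ∀ x : ℝ, W x = Real.exp (Φq * x) / deriv ψ Φq + Real.exp (α * x) / deriv ψ α +
      Real.exp (β₀ * x) / deriv ψ β₀) :
    ∀ β : ℝ, Φq < β →
      ∫ x in Set.Ioi (0 : ℝ), Real.exp (-β * x) * W x = 1 / (ψ β - q) := by
  intro β hβ
  have hσ' : σ ≠ 0 := ne_of_gt hσ
  have hρ' : ρ ≠ 0 := ne_of_gt hρ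
  have hρβ₀ : ρ + β₀ ≠ 0 := by intro h; linarith [h]
  have hρα' : ρ + α ≠ 0 := by intro h; linarith [h]
  have hρΦ : ρ + Φq ≠ 0 := by intro h; linarith [h]
  have hρβ : ρ + β ≠ 0 := by intro h; linarith [h]
  have hxy : β₀ - α ≠ 0 := by intro h; linarith [h]
  have hxz : β₀ - Φq ≠ 0 := by intro h; linarith [h]
  have hyz : α - Φq ≠ 0 := by intro h; linarith [h]
  -- root equations
  have RX : σ^2/2*β₀^3 + (σ^2/2*ρ+μ)*β₀^2 + (μ*ρ-a-q)*β₀ - q*ρ = 0 := by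
    have h := hrβ; rw [hψ] at h; field_simp at h; linear_combination (1/2 : ℝ) * h
  have RY : σ^2/2*α^3 + (σ^2/2*ρ+μ)*α^2 + (μ*ρ-a-q)*α - q*ρ = 0 := by
    have h := hrα; rw [hψ] at h; field_simp at h; linear_combination (1/2 : ℝ) * h
  have RZ : σ^2/2*Φq^3 + (σ^2/2*ρ+μ)*Φq^2 + (μ*ρ-a-q)*Φq - q*ρ = 0 := by
    have h := hrΦ; rw [hψ] at h; field_simp at h; linear_combination (1/2 : ℝ) * h
  have hD : (β₀-α)*(β₀-Φq)*(α-Φq) ≠ 0 := mul_ne_zero (mul_ne_zero hxy hxz) hyz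
  -- Vieta
  have key2 : (μ + σ^2/2*(ρ+β₀+α+Φq)) * ((β₀-α)*(β₀-Φq)*(α-Φq)) = 0 := by
    linear_combination (α-Φq)*RX - (β₀-Φq)*RY + (β₀-α)*RZ
  have hμ' : μ = -(σ^2/2)*(ρ+β₀+α+Φq) := by
    have := (mul_eq_zero.mp key2).resolve_right hD; linarith
  have key1 : ((μ*ρ - a - q) - σ^2/2*(β₀*α+β₀*Φq+α*Φq)) * ((β₀-α)*(β₀-Φq)*(α-Φq)) = 0 := by
    linear_combination (-(α+Φq)*(α-Φq))*RX + ((β₀+Φq)*(β₀-Φq))*RY + (-(β₀+α)*(β₀-α))*RZ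
  have ha' : a = μ*ρ - q - σ^2/2*(β₀*α+β₀*Φq+α*Φq) := by
    have := (mul_eq_zero.mp key1).resolve_right hD; linarith
  have key0 : (σ^2/2*(β₀*α*Φq) - q*ρ) * ((β₀-α)*(β₀-Φq)*(α-Φq)) = 0 := by
    linear_combination (α*Φq*(α-Φq))*RX - (β₀*Φq*(β₀-Φq))*RY + (β₀*α*(β₀-α))*RZ
  have hq' : q = σ^2/2*(β₀*α*Φq)/ρ := by
    have := (mul_eq_zero.mp key0).resolve_right hD
    field_simp; linarith
  -- derivatives
  have hψfun : ψ = fun l : ℝ => σ^2/2 * l^2 + μ*l - a*l/(ρ+l) := funext hψ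
  have hdβval : deriv ψ β₀ = σ^2*β₀ + μ - a*ρ/(ρ+β₀)^2 := by
    rw [hψfun]; exact (psi_hasDerivAt σ μ a ρ β₀ hρβ₀).deriv
  have hdαval : deriv ψ α = σ^2*α + μ - a*ρ/(ρ+α)^2 := by
    rw [hψfun]; exact (psi_hasDerivAt σ μ a ρ α hρα').deriv
  have hdΦval : deriv ψ Φq = σ^2*Φq + μ - a*ρ/(ρ+Φq)^2 := by
    rw [hψfun]; exact (psi_hasDerivAt σ μ a ρ Φq hρΦ).deriv
  have dβeq : deriv ψ β₀ = σ^2/2*(β₀-α)*(β₀-Φq)/(ρ+β₀) := by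
    rw [hdβval, ha', hμ', hq']; field_simp; ring
  have dαeq : deriv ψ α = σ^2/2*(α-β₀)*(α-Φq)/(ρ+α) := by
    rw [hdαval, ha', hμ', hq']; field_simp; ring
  have dΦeq : deriv ψ Φq = σ^2/2*(Φq-β₀)*(Φq-α)/(ρ+Φq) := by
    rw [hdΦval, ha', hμ', hq']; field_simp; ring
  have hψβ : ψ β - q = σ^2/2*(β-β₀)*(β-α)*(β-Φq)/(ρ+β) := by
    rw [hψ β, ha', hμ', hq']; field_simp; ring
  have hψβne : ψ β - q ≠ 0 := by
    rw [hψβ]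
    have h1 : 0 < β - β₀ := by linarith
    have h2 : 0 < β - α := by linarith
    have h3 : 0 < β - Φq := by linarith
    have h4 : 0 < ρ + β := by linarith
    positivity
  -- integral computation
  have hsplit : ∀ x : ℝ, Real.exp (-β*x) * W x =
      Real.exp ((Φq-β)*x)/(deriv ψ Φq) + Real.exp ((α-β)*x)/(deriv ψ α)
      + Real.exp ((β₀-β)*x)/(deriv ψ β₀) := by
    intro x
    rw [hW x, show (Φq-β)*x = Φq*x + -β*x by ring, show (α-β)*x = α*x + -β*x by ring,
      show (β₀-β)*x = β₀*x + -β*x by ring, Real.exp_add, Real.exp_add, Real.exp_add]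
    ring
  have hcΦ : Φq - β < 0 := by linarith
  have hcα : α - β < 0 := by linarith
  have hcβ₀ : β₀ - β < 0 := by linarith
  have iΦ := (exp_integrableOn _ hcΦ).div_const (deriv ψ Φq)
  have iα := (exp_integrableOn _ hcα).div_const (deriv ψ α)
  have iβ := (exp_integrableOn _ hcβ₀).div_const (deriv ψ β₀)
  have iΦα : Integrable (fun x => Real.exp ((Φq-β)*x)/(deriv ψ Φq)
      + Real.exp ((α-β)*x)/(deriv ψ α)) (volume.restrict (Ioi 0)) := iΦ.add iα
  simp only [hsplit]
  rw [integral_add iΦα iβ, integral_add iΦ iα, integral_div, integral_div,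
    integral_div, exp_integral _ hcΦ, exp_integral _ hcα, exp_integral _ hcβ₀,
    dβeq, dαeq, dΦeq, hψβ]
  have hβΦ : β - Φq ≠ 0 := by intro h; linarith [h]
  have hβα : β - α ≠ 0 := by intro h; linarith [h]
  have hββ₀ : β - β₀ ≠ 0 := by intro h; linarith [h]
  have h1 : Φq - β ≠ 0 := by intro h; linarith [h]
  have h2 : α - β ≠ 0 := by intro h; linarith [h]
  have h3 : β₀ - β ≠ 0 := by intro h; linarith [h]
  have h4 : Φq - β₀ ≠ 0 := by intro h; linarith [h]
  have h5 : Φq - α ≠ 0 := by intro h; linarith [h]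
  have h6 : α - β₀ ≠ 0 := by intro h; linarith [h]
  field_simp
  ring
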